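/- Geometric C¹ condition: the C¹ smoothness conditions across the common edge are equivalent to five coplanarity conditions on control points; e.g., the control point (ξ^R₅, b^R₅) equals η₁(ξ^L₁, b^L₁) + η₂(ξ^L₄, b^L₄) + η₃(ξ^L₅, b^L₅), and similarly for the other four groups, with the same barycentric weights applying simultaneously to the domain points and to the coefficients. -/

import Mathlib

open MeasureTheory

/-- The plane `ℝ²` as a Euclidean space. -/
abbrev V2 := EuclideanSpace ℝ (Fin 2)

/-- The (closed) triangle with vertices `p 0, p 1, p 2`. -/
def tri (p : Fin 3 → V2) : Set V2 := convexHull ℝ (Set.range p)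

/-- The `3·3 = 9` boundary points of the WS₃ split: the vertices together with the
trisection points of the edges. -/
def wsPts (p : Fin 3 → V2) : Set V2 :=
  {x | ∃ i j : Fin 3, ∃ k : Fin 4,
    x = ((k : ℝ) / 3) • p i + (1 - (k : ℝ) / 3) • p j}

/-- The union of all the lines of the complete graph on the 9 boundary points of the
WS₃ split. -/
def cutLines (p : Fin 3 → V2) : Set V2 :=
  {x | ∃ a ∈ wsPts p, ∃ b ∈ wsPts p, a ≠ b ∧
    x ∈ (affineSpan ℝ ({a, b} : Set V2) : Set V2)}

/-- `g` is (the restriction of) a bivariate polynomial of total degree at most `d`. -/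
def IsPolyDeg (d : ℕ) (g : V2 → ℝ) : Prop :=
  ∃ q : MvPolynomial (Fin 2) ℝ, q.totalDegree ≤ d ∧
    ∀ z : V2, g z = MvPolynomial.eval (fun i => z i) q

/-- The spline space `S₃²(Δ_{WS₃})`: functions (extended by zero outside `Δ`) that are
`C²` on the triangle `Δ` and coincide with a cubic polynomial on every open region of
the WS₃ split (the connected components of the interior of `Δ` minus the complete
graph of lines through the 9 boundary points). -/
def splineSpace (p : Fin 3 → V2) : Set (V2 → ℝ) :=
  {f | ContDiffOn ℝ 2 f (tri p) ∧
    (∀ x ∈ interior (tri p) \ cutLines p,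
      ∃ g, IsPolyDeg 3 g ∧
        Set.EqOn f g (connectedComponentIn (interior (tri p) \ cutLines p) x)) ∧
    ∀ x ∉ tri p, f x = 0}

/-- The 28 relative scaling weights of the simplex spline basis on the WS₃ split. -/
noncomputable def wvec : Fin 28 → ℝ :=
  ![1/6, 1/6, 1/6, 1/3, 1/3, 1/3, 1/3, 1/3, 1/3, 1/2, 1/2, 1/2, 1/2, 1/2, 1/2,
    2/3, 2/3, 2/3, 5/6, 5/6, 5/6, 2/3, 2/3, 2/3, 2/3, 2/3, 2/3, 1]

/-- Barycentric coordinates (w.r.t. `Δ`) of the 28 domain points of the simplex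
spline basis (0-indexed; entry `i` corresponds to the paper's `ξ_{i+1}`). -/
noncomputable def bary : Fin 28 → Fin 3 → ℝ :=
  ![![1, 0, 0], ![0, 1, 0], ![0, 0, 1],
    ![8/9, 1/9, 0], ![8/9, 0, 1/9], ![0, 8/9, 1/9],
    ![1/9, 8/9, 0], ![1/9, 0, 8/9], ![0, 1/9, 8/9],
    ![2/3, 1/3, 0], ![2/3, 0, 1/3], ![0, 2/3, 1/3],
    ![1/3, 2/3, 0], ![1/3, 0, 2/3], ![0, 1/3, 2/3],
    ![7/9, 1/9, 1/9], ![1/9, 7/9, 1/9], ![1/9, 1/9, 7/9],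
    ![7/15, 7/15, 1/15], ![1/15, 7/15, 7/15], ![7/15, 1/15, 7/15],
    ![5/9, 1/3, 1/9], ![5/9, 1/9, 1/3], ![1/9, 5/9, 1/3],
    ![1/3, 5/9, 1/9], ![1/3, 1/9, 5/9], ![1/9, 1/3, 5/9],
    ![1/3, 1/3, 1/3]]

/-- The domain points of the simplex spline basis on the triangle `p`. -/
noncomputable def dpt (p : Fin 3 → V2) (i : Fin 28) : V2 :=
  ∑ k : Fin 3, bary i k • p k

/-- The sup-norm of a function over the triangle `p`. -/
noncomputable def supTri (p : Fin 3 → V2) (f : V2 → ℝ) : ℝ :=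
  sSup ((fun x => |f x|) '' tri p)

/-- geometric interpretation of the C¹ conditions: the five C¹
coefficient relations across the common edge are equivalent to five coplanarity
relations on the control points `(ξᵢ, bᵢ) ∈ ℝ³`, with the same barycentric weights
`η₁, η₂, η₃` applying simultaneously to the domain points and to the coefficients
(indices are 0-based: paper's `b_i`, `ξ_i` are `b (i-1)`, `ξ (i-1)`). -/
theorem C1_control_point_form (p1 p2 p3 p4 : V2)
    (hL : AffineIndependent ℝ ![p1, p2, p3]) (hR : AffineIndependent ℝ ![p1, p2, p4])
    (η1 η2 η3 : ℝ) (hη : η1 + η2 + η3 = 1)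
    (hp4 : p4 = η1 • p1 + η2 • p2 + η3 • p3)
    (bL bR : Fin 28 → ℝ)
    (cpL : Fin 28 → V2 × ℝ) (cpR : Fin 28 → V2 × ℝ)
    (hcpL : ∀ i, cpL i = (dpt ![p1, p2, p3] i, bL i))
    (hcpR : ∀ i, cpR i = (dpt ![p1, p2, p4] i, bR i)) :
    (bR 4 = η1 * bL 0 + η2 * bL 3 + η3 * bL 4 ∧
      bR 15 = (η1 + η2 / 2) * bL 3 + (η2 / 2) * bL 9 + η3 * bL 15 ∧
      bR 18 = (3 * η1 / 5 + 2 * η2 / 5) * bL 9 +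
        (2 * η1 / 5 + 3 * η2 / 5) * bL 12 + η3 * bL 18 ∧
      bR 16 = (η1 / 2 + η2) * bL 6 + (η1 / 2) * bL 12 + η3 * bL 16 ∧
      bR 5 = η1 * bL 6 + η2 * bL 1 + η3 * bL 5) ↔
    (cpR 4 = η1 • cpL 0 + η2 • cpL 3 + η3 • cpL 4 ∧
      cpR 15 = (η1 + η2 / 2) • cpL 3 + (η2 / 2) • cpL 9 + η3 • cpL 15 ∧
      cpR 18 = (3 * η1 / 5 + 2 * η2 / 5) • cpL 9 +
        (2 * η1 / 5 + 3 * η2 / 5) • cpL 12 + η3 • cpL 18 ∧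
      cpR 16 = (η1 / 2 + η2) • cpL 6 + (η1 / 2) • cpL 12 + η3 • cpL 16 ∧
      cpR 5 = η1 • cpL 6 + η2 • cpL 1 + η3 • cpL 5) := by
  subst hp4
  have h3 : η3 = 1 - η1 - η2 := by linarith
  subst h3
  have key : ∀ (a b c : ℝ) (i j k l : Fin 28),
      bary i 0 + bary i 2 * η1 = a * bary j 0 + b * bary k 0 + c * bary l 0 →
      bary i 1 + bary i 2 * η2 = a * bary j 1 + b * bary k 1 + c * bary l 1 →
      bary i 2 * (1 - η1 - η2) = a * bary j 2 + b * bary k 2 + c * bary l 2 →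
      dpt ![p1, p2, η1 • p1 + η2 • p2 + (1 - η1 - η2) • p3] i =
        a • dpt ![p1, p2, p3] j + b • dpt ![p1, p2, p3] k + c • dpt ![p1, p2, p3] l := by
    intro a b c i j k l e1 e2 e3
    simp only [dpt, Fin.sum_univ_three, Matrix.cons_val_zero, Matrix.cons_val_one,
      Matrix.head_cons, Matrix.cons_val_two, Matrix.tail_cons, smul_add, smul_smul]
    match_scalars
    · linear_combination e1
    · linear_combination e2
    · linear_combination e3
  have hb0 : bary 0 = ![1,0,0] := by
    rw [bary, show (0 : Fin 28) = (⟨0, by norm_num⟩ : Fin 28) from rfl]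
    norm_num [Matrix.cons_val_succ']
  have hb1 : bary 1 = ![0,1,0] := by
    rw [bary, show (1 : Fin 28) = (⟨1, by norm_num⟩ : Fin 28) from rfl]
    norm_num [Matrix.cons_val_succ']
  have hb3 : bary 3 = ![8/9,1/9,0] := by
    rw [bary, show (3 : Fin 28) = (⟨3, by norm_num⟩ : Fin 28) from rfl]
    norm_num [Matrix.cons_val_succ']
  have hb4 : bary 4 = ![8/9,0,1/9] := by
    rw [bary, show (4 : Fin 28) = (⟨4, by norm_num⟩ : Fin 28) from rfl]
    norm_num [Matrix.cons_val_succ']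
  have hb5 : bary 5 = ![0,8/9,1/9] := by
    rw [bary, show (5 : Fin 28) = (⟨5, by norm_num⟩ : Fin 28) from rfl]
    norm_num [Matrix.cons_val_succ']
  have hb6 : bary 6 = ![1/9,8/9,0] := by
    rw [bary, show (6 : Fin 28) = (⟨6, by norm_num⟩ : Fin 28) from rfl]
    norm_num [Matrix.cons_val_succ']
  have hb9 : bary 9 = ![2/3,1/3,0] := by
    rw [bary, show (9 : Fin 28) = (⟨9, by norm_num⟩ : Fin 28) from rfl]
    norm_num [Matrix.cons_val_succ']
  have hb12 : bary 12 = ![1/3,2/3,0] := by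
    rw [bary, show (12 : Fin 28) = (⟨12, by norm_num⟩ : Fin 28) from rfl]
    norm_num [Matrix.cons_val_succ']
  have hb15 : bary 15 = ![7/9,1/9,1/9] := by
    rw [bary, show (15 : Fin 28) = (⟨15, by norm_num⟩ : Fin 28) from rfl]
    norm_num [Matrix.cons_val_succ']
  have hb16 : bary 16 = ![1/9,7/9,1/9] := by
    rw [bary, show (16 : Fin 28) = (⟨16, by norm_num⟩ : Fin 28) from rfl]
    norm_num [Matrix.cons_val_succ']
  have hb18 : bary 18 = ![7/15,7/15,1/15] := by
    rw [bary, show (18 : Fin 28) = (⟨18, by norm_num⟩ : Fin 28) from rfl]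
    norm_num [Matrix.cons_val_succ']
  have k1 := key η1 η2 (1 - η1 - η2) 4 0 3 4 (by simp only [hb4, hb0, hb3, hb4]; norm_num [Matrix.cons_val_two, Matrix.tail_cons, Matrix.head_cons]; try ring)
    (by simp only [hb4, hb0, hb3, hb4]; norm_num [Matrix.cons_val_two, Matrix.tail_cons, Matrix.head_cons]; try ring)
    (by simp only [hb4, hb0, hb3, hb4]; norm_num [Matrix.cons_val_two, Matrix.tail_cons, Matrix.head_cons]; try ring)
  have k2 := key (η1 + η2 / 2) (η2 / 2) (1 - η1 - η2) 15 3 9 15 (by simp only [hb15, hb3, hb9, hb15]; norm_num [Matrix.cons_val_two, Matrix.tail_cons, Matrix.head_cons]; try ring)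
    (by simp only [hb15, hb3, hb9, hb15]; norm_num [Matrix.cons_val_two, Matrix.tail_cons, Matrix.head_cons]; try ring)
    (by simp only [hb15, hb3, hb9, hb15]; norm_num [Matrix.cons_val_two, Matrix.tail_cons, Matrix.head_cons]; try ring)
  have k3 := key (3 * η1 / 5 + 2 * η2 / 5) (2 * η1 / 5 + 3 * η2 / 5) (1 - η1 - η2) 18 9 12 18 (by simp only [hb18, hb9, hb12, hb18]; norm_num [Matrix.cons_val_two, Matrix.tail_cons, Matrix.head_cons]; try ring)
    (by simp only [hb18, hb9, hb12, hb18]; norm_num [Matrix.cons_val_two, Matrix.tail_cons, Matrix.head_cons]; try ring)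
    (by simp only [hb18, hb9, hb12, hb18]; norm_num [Matrix.cons_val_two, Matrix.tail_cons, Matrix.head_cons]; try ring)
  have k4 := key (η1 / 2 + η2) (η1 / 2) (1 - η1 - η2) 16 6 12 16 (by simp only [hb16, hb6, hb12, hb16]; norm_num [Matrix.cons_val_two, Matrix.tail_cons, Matrix.head_cons]; try ring)
    (by simp only [hb16, hb6, hb12, hb16]; norm_num [Matrix.cons_val_two, Matrix.tail_cons, Matrix.head_cons]; try ring)
    (by simp only [hb16, hb6, hb12, hb16]; norm_num [Matrix.cons_val_two, Matrix.tail_cons, Matrix.head_cons]; try ring)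
  have k5 := key η1 η2 (1 - η1 - η2) 5 6 1 5 (by simp only [hb5, hb6, hb1, hb5]; norm_num [Matrix.cons_val_two, Matrix.tail_cons, Matrix.head_cons]; try ring)
    (by simp only [hb5, hb6, hb1, hb5]; norm_num [Matrix.cons_val_two, Matrix.tail_cons, Matrix.head_cons]; try ring)
    (by simp only [hb5, hb6, hb1, hb5]; norm_num [Matrix.cons_val_two, Matrix.tail_cons, Matrix.head_cons]; try ring)
  simp only [hcpL, hcpR, Prod.smul_mk, Prod.mk_add_mk, Prod.mk.injEq, smul_eq_mul]
  constructor
  · rintro ⟨c1, c2, c3, c4, c5⟩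
    exact ⟨⟨k1, c1⟩, ⟨k2, c2⟩, ⟨k3, c3⟩, ⟨k4, c4⟩, ⟨k5, c5⟩⟩
  · rintro ⟨⟨-, c1⟩, ⟨-, c2⟩, ⟨-, c3⟩, ⟨-, c4⟩, ⟨-, c5⟩⟩
    exact ⟨c1, c2, c3, c4, c5⟩
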